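/- Let φ(x) = (1 − |x − x₀|/h₀)₊ · e^{x²/(2T)} on ℝ, where h₀, T > 0 and x₀ ∈ ℝ. Then φ satisfies |φ(x) − φ(y)| ≤ C₁(1 + φ(x) + φ(y))|x − y| for some constant C₁ > 0, but φ is not continuously differentiable on ℝ. -/

import Mathlib

open Real

/-- The function `φ(x) = (1 − |x − x₀|/h₀)₊ e^{x²/(2T)}` satisfies the
growth-Lipschitz condition (A4) but is not continuously differentiable. -/
theorem stmt_13 (h₀ T x₀ : ℝ) (hh₀ : 0 < h₀) (hT : 0 < T) :
    let φ : ℝ → ℝ := fun x => max (1 - |x - x₀| / h₀) 0 * Real.exp (x ^ 2 / (2 * T))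
    (∃ C₁ : ℝ, 0 < C₁ ∧ ∀ x y, |φ x - φ y| ≤ C₁ * (1 + φ x + φ y) * |x - y|) ∧
    ¬ ContDiff ℝ 1 φ := by
  intro φ
  set m : ℝ → ℝ := fun x => max (1 - |x - x₀| / h₀) 0 with hm
  set g : ℝ → ℝ := fun x => Real.exp (x ^ 2 / (2 * T)) with hg
  set B : ℝ := |x₀| + h₀ with hB
  set M : ℝ := Real.exp (B ^ 2 / (2 * T)) with hM
  have hB0 : 0 < B := by positivity
  have hM0 : 0 < M := Real.exp_pos _
  have hg0 : ∀ x, 0 < g x := fun x => Real.exp_pos _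
  have hm0 : ∀ x, 0 ≤ m x := fun x => le_max_right _ _
  have hm1 : ∀ x, m x ≤ 1 := by
    intro x
    apply max_le _ zero_le_one
    have : 0 ≤ |x - x₀| / h₀ := by positivity
    linarith
  have hφ0 : ∀ x, 0 ≤ φ x := fun x => mul_nonneg (hm0 x) (hg0 x).le
  have hmlip : ∀ x y, |m x - m y| ≤ |x - y| / h₀ := by
    intro x y
    calc |m x - m y| ≤ |(1 - |x - x₀| / h₀) - (1 - |y - x₀| / h₀)| :=
          abs_max_sub_max_le_abs _ _ _
      _ = (abs (|y - x₀| - |x - x₀|)) / h₀ := by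
          have e1 : (1 - |x - x₀| / h₀) - (1 - |y - x₀| / h₀) = (|y - x₀| - |x - x₀|) / h₀ := by
            ring
          rw [e1, abs_div, abs_of_pos hh₀]
      _ ≤ |x - y| / h₀ := by
          apply div_le_div_of_nonneg_right ?_ hh₀.le
          calc (abs (|y - x₀| - |x - x₀|)) ≤ |(y - x₀) - (x - x₀)| := abs_abs_sub_abs_le_abs_sub _ _
            _ = |x - y| := by rw [show (y - x₀) - (x - x₀) = y - x by ring, abs_sub_comm]
  have hsupp : ∀ x, m x ≠ 0 → |x| ≤ B ∧ g x ≤ M := by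
    intro x hx
    have h1 : 0 < 1 - |x - x₀| / h₀ := by
      by_contra hc
      push_neg at hc
      exact hx (max_eq_right hc)
    have h2 : |x - x₀| ≤ h₀ := by
      have := (div_lt_one hh₀).mp (by linarith)
      linarith
    have h3 : |x| ≤ B := by
      calc |x| = |x₀ + (x - x₀)| := by ring_nf
        _ ≤ |x₀| + |x - x₀| := abs_add_le _ _
        _ ≤ B := by rw [hB]; linarith
    refine ⟨h3, ?_⟩
    have h4 : x ^ 2 ≤ B ^ 2 := by
      have := abs_le.mp h3
      nlinarith
    exact Real.exp_le_exp.mpr (div_le_div_of_nonneg_right h4 (by linarith))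
  have hexp : ∀ a b : ℝ, Real.exp a - Real.exp b ≤ (a - b) * Real.exp a := by
    intro a b
    have h1 : (b - a) + 1 ≤ Real.exp (b - a) := Real.add_one_le_exp _
    have h2 : Real.exp (b - a) * Real.exp a = Real.exp b := by
      rw [← Real.exp_add]; ring_nf
    nlinarith [Real.exp_pos a, Real.exp_pos b]
  set C₁ : ℝ := M / h₀ + M * B / T with hC₁
  have hC₁0 : 0 < C₁ := by positivity
  have key : ∀ x y, φ x - φ y ≤ C₁ * |x - y| := by
    intro x y
    show m x * g x - m y * g y ≤ _
    have hrhs : 0 ≤ C₁ * |x - y| := by positivity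
    by_cases hx : m x = 0
    · have : 0 ≤ m y * g y := mul_nonneg (hm0 y) (hg0 y).le
      rw [hx]
      linarith
    · obtain ⟨hxB, hgx⟩ := hsupp x hx
      by_cases hy : m y = 0
      · have hd : m x ≤ |x - y| / h₀ := by
          have := hmlip x y
          rw [hy] at this
          simpa [abs_of_nonneg (hm0 x)] using this
        have hd0 : 0 ≤ |x - y| / h₀ := by positivity
        rw [hy]
        have h1 : m x * g x ≤ (|x - y| / h₀) * g x :=
          mul_le_mul_of_nonneg_right hd (hg0 x).le
        have h2 : (|x - y| / h₀) * g x ≤ (|x - y| / h₀) * M :=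
          mul_le_mul_of_nonneg_left hgx hd0
        have h3 : (|x - y| / h₀) * M ≤ C₁ * |x - y| := by
          have e1 : (|x - y| / h₀) * M = M / h₀ * |x - y| := by ring
          rw [e1, hC₁]
          exact mul_le_mul_of_nonneg_right
            (le_add_of_nonneg_right (by positivity)) (abs_nonneg _)
        rw [zero_mul, sub_zero]
        exact h1.trans (h2.trans h3)
      · obtain ⟨hyB, hgy⟩ := hsupp y hy
        have hd : m x - m y ≤ |x - y| / h₀ := (le_abs_self _).trans (hmlip x y)
        have hd0 : 0 ≤ |x - y| / h₀ := by positivity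
        -- bound on exponent difference
        have hsq : x ^ 2 / (2 * T) - y ^ 2 / (2 * T) ≤ B / T * |x - y| := by
          have h1 : x ^ 2 - y ^ 2 ≤ 2 * B * |x - y| := by
            calc x ^ 2 - y ^ 2 ≤ |x ^ 2 - y ^ 2| := le_abs_self _
              _ = |x + y| * |x - y| := by rw [← abs_mul]; congr 1; ring
              _ ≤ (2 * B) * |x - y| := by
                  apply mul_le_mul_of_nonneg_right _ (abs_nonneg _)
                  calc |x + y| ≤ |x| + |y| := abs_add_le _ _
                    _ ≤ 2 * B := by linarith
          have e1 : x ^ 2 / (2 * T) - y ^ 2 / (2 * T) = (x ^ 2 - y ^ 2) / (2 * T) := by ring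
          rw [e1, div_le_iff₀ (by linarith : (0:ℝ) < 2 * T)]
          have e2 : B / T * |x - y| * (2 * T) = 2 * B * |x - y| := by
            field_simp
          rw [e2]
          exact h1
        have hDD : 0 ≤ B / T * |x - y| := by positivity
        have hgd : g x - g y ≤ B / T * M * |x - y| := by
          have h1 : g x - g y ≤ (x ^ 2 / (2 * T) - y ^ 2 / (2 * T)) * g x := hexp _ _
          have h2 : (x ^ 2 / (2 * T) - y ^ 2 / (2 * T)) * g x ≤ (B / T * |x - y|) * g x :=
            mul_le_mul_of_nonneg_right hsq (hg0 x).le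
          have h3 : (B / T * |x - y|) * g x ≤ (B / T * |x - y|) * M :=
            mul_le_mul_of_nonneg_left hgx hDD
          calc g x - g y ≤ (B / T * |x - y|) * M := by linarith
            _ = B / T * M * |x - y| := by ring
        have hsplit : m x * g x - m y * g y = (m x - m y) * g x + m y * (g x - g y) := by ring
        have h1 : (m x - m y) * g x ≤ (|x - y| / h₀) * M := by
          have a1 : (m x - m y) * g x ≤ (|x - y| / h₀) * g x :=
            mul_le_mul_of_nonneg_right hd (hg0 x).le
          have a2 : (|x - y| / h₀) * g x ≤ (|x - y| / h₀) * M :=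
            mul_le_mul_of_nonneg_left hgx hd0
          linarith
        have h2 : m y * (g x - g y) ≤ B / T * M * |x - y| := by
          have hD0 : 0 ≤ B / T * M * |x - y| := by positivity
          have a1 : m y * (g x - g y) ≤ m y * (B / T * M * |x - y|) :=
            mul_le_mul_of_nonneg_left hgd (hm0 y)
          have a2 : m y * (B / T * M * |x - y|) ≤ 1 * (B / T * M * |x - y|) :=
            mul_le_mul_of_nonneg_right (hm1 y) hD0
          linarith
        rw [hsplit]
        calc (m x - m y) * g x + m y * (g x - g y)
            ≤ (|x - y| / h₀) * M + B / T * M * |x - y| := add_le_add h1 h2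
          _ = C₁ * |x - y| := by rw [hC₁]; ring
  constructor
  · refine ⟨C₁, hC₁0, fun x y => ?_⟩
    have h1 : |φ x - φ y| ≤ C₁ * |x - y| := by
      rw [abs_sub_le_iff]
      exact ⟨key x y, by simpa [abs_sub_comm] using key y x⟩
    calc |φ x - φ y| ≤ C₁ * |x - y| := h1
      _ ≤ C₁ * (1 + φ x + φ y) * |x - y| := by
          apply mul_le_mul_of_nonneg_right _ (abs_nonneg _)
          nth_rewrite 1 [← mul_one C₁]
          exact mul_le_mul_of_nonneg_left (by linarith [hφ0 x, hφ0 y]) hC₁0.le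
  · intro h
    have hd : DifferentiableAt ℝ φ x₀ := (h.differentiable one_ne_zero).differentiableAt
    have hg2 : DifferentiableAt ℝ (fun x : ℝ => Real.exp (-(x ^ 2) / (2 * T))) x₀ := by
      fun_prop
    have hprod : DifferentiableAt ℝ (fun x => φ x * Real.exp (-(x ^ 2) / (2 * T))) x₀ :=
      hd.mul hg2
    have heq : (fun x => φ x * Real.exp (-(x ^ 2) / (2 * T))) = m := by
      funext x
      show m x * g x * _ = m x
      rw [hg, mul_assoc, ← Real.exp_add]
      have : x ^ 2 / (2 * T) + -(x ^ 2) / (2 * T) = 0 := by ring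
      rw [this, Real.exp_zero, mul_one]
    rw [heq] at hprod
    have hev : (fun x : ℝ => 1 - |x - x₀| / h₀) =ᶠ[nhds x₀] m := by
      filter_upwards [Metric.ball_mem_nhds x₀ hh₀] with x hx
      have h1 : |x - x₀| < h₀ := by simpa [Real.dist_eq] using hx
      have h2 : |x - x₀| / h₀ ≤ 1 := by
        rw [div_le_one hh₀]; linarith
      exact (max_eq_left (by linarith)).symm
    have h1 : DifferentiableAt ℝ (fun x : ℝ => 1 - |x - x₀| / h₀) x₀ :=
      hprod.congr_of_eventuallyEq hev
    have habs : DifferentiableAt ℝ (fun x : ℝ => |x - x₀|) x₀ := by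
      have h2 : (fun x : ℝ => |x - x₀|) = fun x => (1 - (1 - |x - x₀| / h₀)) * h₀ := by
        funext x
        field_simp
        ring
      rw [h2]
      exact ((differentiableAt_const _).sub h1).mul_const _
    have h3 : DifferentiableAt ℝ (fun y : ℝ => |y|) 0 := by
      have h4 : DifferentiableAt ℝ (fun y : ℝ => y + x₀) 0 := by fun_prop
      have h5 : DifferentiableAt ℝ (fun x : ℝ => |x - x₀|) ((fun y : ℝ => y + x₀) 0) := by
        simpa using habs
      have h6 := h5.comp 0 h4
      have e : ((fun x : ℝ => |x - x₀|) ∘ fun y : ℝ => y + x₀) = fun y : ℝ => |y| := by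
        funext y
        simp
      rwa [e] at h6
    exact not_differentiableAt_abs_zero h3
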